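/- The ring homomorphism ℤ[X'] → ℤ[X]/(I₀ + (f₁)) determined by x ↦ x̄, y ↦ ȳ, z ↦ z̄₊, z' ↦ z̄₋, and w_{m,η} ↦ w̄_{m,η} for all m ≥ 1 and η ∈ k̄, induces a ring isomorphism ℤ[X']/J ≅ ℤ[X]/(I₀ + (f₁)), where (f₁) denotes the ideal of ℤ[X] generated by f₁(x,y) and bars denote images in ℤ[X]/(I₀ + (f₁)). -/
import Mathlib


open MvPolynomial

/- The set of variables `X = {x, y, z₊, z₋} ∪ {w_{m,η} | m ≥ 1, η ∈ k̄}`, where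
`k̄ = k ∪ {∞}` is encoded as `Option k` (with `none` playing the role of `∞`).
The variables `x, y, z₊, z₋` are `Sum.inl 0, Sum.inl 1, Sum.inl 2, Sum.inl 3`,
and `w_{m,η}` is `Sum.inr (m, η)`. -/
abbrev BigVar (k : Type*) := Fin 4 ⊕ (ℕ+ × Option k)

/-- The variable `w_{m,η}` of `ℤ[X]`. -/
noncomputable def W {k : Type*} (m : ℕ+) (η : Option k) : MvPolynomial (BigVar k) ℤ :=
  X (Sum.inr (m, η))

/-- `f₁(x,y) = ∑_{i=0}^{c(n-2)} (-1)^i binom(n-1-i, i) x^i y^{n-1-2i}`,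
where `c(t) = ⌊(t+1)/2⌋`, viewed in `ℤ[x, y, z₊, z₋] = MvPolynomial (Fin 4) ℤ`. -/
noncomputable def f1 (n : ℕ) : MvPolynomial (Fin 4) ℤ :=
  ∑ i ∈ Finset.range ((n - 1) / 2 + 1),
    C ((-1 : ℤ) ^ i * (Nat.choose (n - 1 - i) i : ℤ)) * X 0 ^ i * X 1 ^ (n - 1 - 2 * i)

/-- `f₂(x,y) = ∑_{i=0}^{c(n-1)} (-1)^i (n/(n-i)) binom(n-i, i) x^i y^{n-2i} - 2`
(each coefficient `n/(n-i) · binom(n-i, i)` is an integer). -/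
noncomputable def f2 (n : ℕ) : MvPolynomial (Fin 4) ℤ :=
  (∑ i ∈ Finset.range (n / 2 + 1),
    C ((-1 : ℤ) ^ i * ((n * Nat.choose (n - i) i / (n - i) : ℕ) : ℤ)) *
      X 0 ^ i * X 1 ^ (n - 2 * i)) - 2

/-- `f₃(x,y) = ∑_{i=1}^{c(n-2)} (-1)^{i-1} binom(n-i-2, i-1) x^{i+1} y^{n-1-2i}`. -/
noncomputable def f3 (n : ℕ) : MvPolynomial (Fin 4) ℤ :=
  ∑ i ∈ Finset.Icc 1 ((n - 1) / 2),
    C ((-1 : ℤ) ^ (i - 1) * (Nat.choose (n - i - 2) (i - 1) : ℤ)) *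
      X 0 ^ (i + 1) * X 1 ^ (n - 1 - 2 * i)

/-- `f₄(x,y) = ∑_{i=1}^{c(n-1)} (-1)^{i-1} binom(n-i-1, i-1) x^i y^{n-2i}`. -/
noncomputable def f4 (n : ℕ) : MvPolynomial (Fin 4) ℤ :=
  ∑ i ∈ Finset.Icc 1 (n / 2),
    C ((-1 : ℤ) ^ (i - 1) * (Nat.choose (n - i - 1) (i - 1) : ℤ)) *
      X 0 ^ i * X 1 ^ (n - 2 * i)

/-- The canonical inclusion `ℤ[x, y, z₊, z₋] → ℤ[X]` of polynomial rings. -/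
noncomputable def incl (k : Type*) :
    MvPolynomial (Fin 4) ℤ →+* MvPolynomial (BigVar k) ℤ :=
  (rename (Sum.inl : Fin 4 → BigVar k)).toRingHom

/-- `f₁, f₂, f₃, f₄` viewed inside `ℤ[X]`. -/
noncomputable def F1 (n : ℕ) (k : Type*) : MvPolynomial (BigVar k) ℤ := incl k (f1 n)
noncomputable def F2 (n : ℕ) (k : Type*) : MvPolynomial (BigVar k) ℤ := incl k (f2 n)
noncomputable def F3 (n : ℕ) (k : Type*) : MvPolynomial (BigVar k) ℤ := incl k (f3 n)
noncomputable def F4 (n : ℕ) (k : Type*) : MvPolynomial (BigVar k) ℤ := incl k (f4 n)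

/-- The ideal `I₀` of `ℤ[X]`, generated by `x^n - 1`; `f₁f₂`;
`z₊z₋ - 1 - f₁(2y + 4f₃)`; `f₁(z₊ - 1 - 2f₄)`; `f₁(z₊ - z₋)`;
`f₁(w_{m,η} - m - m f₄)`; `(z₊ - f₄)w_{m,η} - m x f₁²`; `(z₋ - f₄)w_{m,η} - m f₁(y + f₃)`;
`w_{m,η}w_{s,α} - m s x f₁²` for `η ≠ α`; and
`w_{m,η}(w_{t,η} - 1 - f₄) - (t-1) m x f₁²` for `m ≤ t`. -/
noncomputable def idealI0 (n : ℕ) (k : Type*) : Ideal (MvPolynomial (BigVar k) ℤ) :=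
  Ideal.span
    (({X (Sum.inl 0) ^ n - 1,
       F1 n k * F2 n k,
       X (Sum.inl 2) * X (Sum.inl 3) - 1 - F1 n k * (2 * X (Sum.inl 1) + 4 * F3 n k),
       F1 n k * (X (Sum.inl 2) - 1 - 2 * F4 n k),
       F1 n k * (X (Sum.inl 2) - X (Sum.inl 3))} :
      Set (MvPolynomial (BigVar k) ℤ)) ∪
     {p | ∃ (m : ℕ+) (η : Option k),
       p = F1 n k * (W m η - C ((m : ℕ) : ℤ) - C ((m : ℕ) : ℤ) * F4 n k)} ∪
     {p | ∃ (m : ℕ+) (η : Option k),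
       p = (X (Sum.inl 2) - F4 n k) * W m η - C ((m : ℕ) : ℤ) * X (Sum.inl 0) * F1 n k ^ 2} ∪
     {p | ∃ (m : ℕ+) (η : Option k),
       p = (X (Sum.inl 3) - F4 n k) * W m η -
         C ((m : ℕ) : ℤ) * F1 n k * (X (Sum.inl 1) + F3 n k)} ∪
     {p | ∃ (m s : ℕ+) (η α : Option k), η ≠ α ∧
       p = W m η * W s α - C ((m : ℕ) : ℤ) * C ((s : ℕ) : ℤ) * X (Sum.inl 0) * F1 n k ^ 2} ∪
     {p | ∃ (m t : ℕ+) (η : Option k), m ≤ t ∧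
       p = W m η * (W t η - 1 - F4 n k) -
         C (((t : ℕ) - 1 : ℕ) : ℤ) * C ((m : ℕ) : ℤ) * X (Sum.inl 0) * F1 n k ^ 2})

/- The polynomial ring `ℤ[X']` in the variables `X' = {x, y, z, z'} ∪ {w_{m,η}}` is encoded
by the same variable type `BigVar k`, with `x = X (Sum.inl 0)`, `y = X (Sum.inl 1)`,
`z = X (Sum.inl 2)`, `z' = X (Sum.inl 3)` (the variable `z'` playing the role of `z⁻¹`). -/

/-- The ideal `J` of `ℤ[X']` generated by `x^n - 1`; `f₁(x,y)`; `zz' - 1`;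
`(z - f₄(x,y))w_{m,η}`; `(z - z')w_{m,η}`; `w_{m,η}w_{s,α}` for `η ≠ α`; and
`w_{m,η}(w_{t,η} - 1 - f₄(x,y))` for `m ≤ t`. -/
noncomputable def idealJ (n : ℕ) (k : Type*) : Ideal (MvPolynomial (BigVar k) ℤ) :=
  Ideal.span
    (({X (Sum.inl 0) ^ n - 1,
       F1 n k,
       X (Sum.inl 2) * X (Sum.inl 3) - 1} :
      Set (MvPolynomial (BigVar k) ℤ)) ∪
     {p | ∃ (m : ℕ+) (η : Option k), p = (X (Sum.inl 2) - F4 n k) * W m η} ∪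
     {p | ∃ (m : ℕ+) (η : Option k), p = (X (Sum.inl 2) - X (Sum.inl 3)) * W m η} ∪
     {p | ∃ (m s : ℕ+) (η α : Option k), η ≠ α ∧ p = W m η * W s α} ∪
     {p | ∃ (m t : ℕ+) (η : Option k), m ≤ t ∧ p = W m η * (W t η - 1 - F4 n k)})

lemma idealJ_eq (n : ℕ) (k : Type*) :
    idealJ n k = idealI0 n k + Ideal.span {F1 n k} := by
  have hF1J : F1 n k ∈ idealJ n k :=
    Ideal.subset_span (Or.inl (Or.inl (Or.inl (Or.inl (Or.inr (Or.inl rfl))))))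
  have hzwJ : ∀ (m : ℕ+) (η : Option k),
      (X (Sum.inl 2) - F4 n k) * W m η ∈ idealJ n k := fun m η =>
    Ideal.subset_span (Or.inl (Or.inl (Or.inl (Or.inr ⟨m, η, rfl⟩))))
  have hzzwJ : ∀ (m : ℕ+) (η : Option k),
      (X (Sum.inl 2) - X (Sum.inl 3)) * W m η ∈ idealJ n k := fun m η =>
    Ideal.subset_span (Or.inl (Or.inl (Or.inr ⟨m, η, rfl⟩)))
  have hzzJ : X (Sum.inl 2) * X (Sum.inl 3) - 1 ∈ idealJ n k :=
    Ideal.subset_span (Or.inl (Or.inl (Or.inl (Or.inl (Or.inr (Or.inr rfl))))))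
  have hxJ : X (Sum.inl 0) ^ n - 1 ∈ idealJ n k :=
    Ideal.subset_span (Or.inl (Or.inl (Or.inl (Or.inl (Or.inl rfl)))))
  have hwwJ : ∀ (m s : ℕ+) (η α : Option k), η ≠ α →
      W m η * W s α ∈ idealJ n k := fun m s η α hne =>
    Ideal.subset_span (Or.inl (Or.inr ⟨m, s, η, α, hne, rfl⟩))
  have hwtJ : ∀ (m t : ℕ+) (η : Option k), m ≤ t →
      W m η * (W t η - 1 - F4 n k) ∈ idealJ n k := fun m t η hle =>
    Ideal.subset_span (Or.inr ⟨m, t, η, hle, rfl⟩)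
  have hsq : ∀ g : MvPolynomial (BigVar k) ℤ, g * F1 n k ^ 2 ∈ idealJ n k := by
    intro g
    rw [pow_two]
    exact Ideal.mul_mem_left _ g (Ideal.mul_mem_left _ _ hF1J)
  apply le_antisymm
  · rw [idealJ, Ideal.span_le]
    have hle : idealI0 n k ≤ idealI0 n k + Ideal.span {F1 n k} := by
      rw [Ideal.add_eq_sup]; exact le_sup_left
    have hI0 : ∀ p ∈ (({X (Sum.inl 0) ^ n - 1,
       F1 n k * F2 n k,
       X (Sum.inl 2) * X (Sum.inl 3) - 1 - F1 n k * (2 * X (Sum.inl 1) + 4 * F3 n k),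
       F1 n k * (X (Sum.inl 2) - 1 - 2 * F4 n k),
       F1 n k * (X (Sum.inl 2) - X (Sum.inl 3))} :
      Set (MvPolynomial (BigVar k) ℤ)) ∪
     {p | ∃ (m : ℕ+) (η : Option k),
       p = F1 n k * (W m η - C ((m : ℕ) : ℤ) - C ((m : ℕ) : ℤ) * F4 n k)} ∪
     {p | ∃ (m : ℕ+) (η : Option k),
       p = (X (Sum.inl 2) - F4 n k) * W m η - C ((m : ℕ) : ℤ) * X (Sum.inl 0) * F1 n k ^ 2} ∪
     {p | ∃ (m : ℕ+) (η : Option k),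
       p = (X (Sum.inl 3) - F4 n k) * W m η -
         C ((m : ℕ) : ℤ) * F1 n k * (X (Sum.inl 1) + F3 n k)} ∪
     {p | ∃ (m s : ℕ+) (η α : Option k), η ≠ α ∧
       p = W m η * W s α - C ((m : ℕ) : ℤ) * C ((s : ℕ) : ℤ) * X (Sum.inl 0) * F1 n k ^ 2} ∪
     {p | ∃ (m t : ℕ+) (η : Option k), m ≤ t ∧
       p = W m η * (W t η - 1 - F4 n k) -
         C (((t : ℕ) - 1 : ℕ) : ℤ) * C ((m : ℕ) : ℤ) * X (Sum.inl 0) * F1 n k ^ 2}),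
        p ∈ idealI0 n k + Ideal.span {F1 n k} := fun p hp =>
      hle (Ideal.subset_span hp)
    have hF1K : F1 n k ∈ idealI0 n k + Ideal.span {F1 n k} := by
      rw [Ideal.add_eq_sup]
      exact Ideal.mem_sup_right (Ideal.subset_span rfl)
    intro p hp
    rcases hp with ((((hp | hp | hp) | ⟨m, η, rfl⟩) | ⟨m, η, rfl⟩) |
      ⟨m, s, η, α, hne, rfl⟩) | ⟨m, t, η, hle', rfl⟩
    · exact hI0 _ (Or.inl (Or.inl (Or.inl (Or.inl (Or.inl (Or.inl hp))))))
    · -- p = F1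
      rw [hp]; exact hF1K
    · -- p = zz' - 1
      rw [Set.mem_singleton_iff] at hp
      have heq : X (Sum.inl 2) * X (Sum.inl 3) - 1 =
          (X (Sum.inl 2) * X (Sum.inl 3) - 1 - F1 n k * (2 * X (Sum.inl 1) + 4 * F3 n k)) +
          (2 * X (Sum.inl 1) + 4 * F3 n k) * F1 n k := by ring
      rw [hp, heq]
      exact add_mem
        (hI0 _ (Or.inl (Or.inl (Or.inl (Or.inl (Or.inl
          (Or.inr (Or.inr (Or.inl rfl)))))))))
        (Ideal.mul_mem_left _ _ hF1K)
    · -- (z - F4) * W m η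
      have heq : (X (Sum.inl 2) - F4 n k) * W m η =
          ((X (Sum.inl 2) - F4 n k) * W m η -
            C ((m : ℕ) : ℤ) * X (Sum.inl 0) * F1 n k ^ 2) +
          (C ((m : ℕ) : ℤ) * X (Sum.inl 0) * F1 n k) * F1 n k := by ring
      rw [heq]
      exact add_mem (hI0 _ (Or.inl (Or.inl (Or.inl (Or.inr ⟨m, η, rfl⟩)))))
        (Ideal.mul_mem_left _ _ hF1K)
    · -- (z - z') * W m η
      have heq : (X (Sum.inl 2) - X (Sum.inl 3)) * W m η =
          ((X (Sum.inl 2) - F4 n k) * W m η -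
            C ((m : ℕ) : ℤ) * X (Sum.inl 0) * F1 n k ^ 2) -
          ((X (Sum.inl 3) - F4 n k) * W m η -
            C ((m : ℕ) : ℤ) * F1 n k * (X (Sum.inl 1) + F3 n k)) +
          (C ((m : ℕ) : ℤ) * X (Sum.inl 0) * F1 n k -
            C ((m : ℕ) : ℤ) * (X (Sum.inl 1) + F3 n k)) * F1 n k := by ring
      rw [heq]
      exact add_mem
        (sub_mem (hI0 _ (Or.inl (Or.inl (Or.inl (Or.inr ⟨m, η, rfl⟩)))))
          (hI0 _ (Or.inl (Or.inl (Or.inr ⟨m, η, rfl⟩)))))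
        (Ideal.mul_mem_left _ _ hF1K)
    · -- W m η * W s α
      have heq : W m η * W s α =
          (W m η * W s α -
            C ((m : ℕ) : ℤ) * C ((s : ℕ) : ℤ) * X (Sum.inl 0) * F1 n k ^ 2) +
          (C ((m : ℕ) : ℤ) * C ((s : ℕ) : ℤ) * X (Sum.inl 0) * F1 n k) * F1 n k := by ring
      rw [heq]
      exact add_mem (hI0 _ (Or.inl (Or.inr ⟨m, s, η, α, hne, rfl⟩)))
        (Ideal.mul_mem_left _ _ hF1K)
    · -- W m η * (W t η - 1 - F4)
      have heq : W m η * (W t η - 1 - F4 n k) =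
          (W m η * (W t η - 1 - F4 n k) -
            C (((t : ℕ) - 1 : ℕ) : ℤ) * C ((m : ℕ) : ℤ) * X (Sum.inl 0) * F1 n k ^ 2) +
          (C (((t : ℕ) - 1 : ℕ) : ℤ) * C ((m : ℕ) : ℤ) * X (Sum.inl 0) * F1 n k) *
            F1 n k := by ring
      rw [heq]
      exact add_mem (hI0 _ (Or.inr ⟨m, t, η, hle', rfl⟩))
        (Ideal.mul_mem_left _ _ hF1K)
  · rw [Ideal.add_eq_sup, sup_le_iff]
    constructor
    · rw [idealI0, Ideal.span_le]
      intro p hp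
      rcases hp with (((((hp | hp | hp | hp | hp) | ⟨m, η, rfl⟩) | ⟨m, η, rfl⟩) |
        ⟨m, η, rfl⟩) | ⟨m, s, η, α, hne, rfl⟩) | ⟨m, t, η, hle', rfl⟩
      · rw [hp]; exact hxJ
      · rw [hp]; exact Ideal.mul_mem_right _ _ hF1J
      · rw [hp]
        exact sub_mem hzzJ (Ideal.mul_mem_right _ _ hF1J)
      · rw [hp]; exact Ideal.mul_mem_right _ _ hF1J
      · rw [Set.mem_singleton_iff] at hp
        rw [hp]; exact Ideal.mul_mem_right _ _ hF1J
      · exact Ideal.mul_mem_right _ _ hF1J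
      · exact sub_mem (hzwJ m η) (hsq _)
      · have heq : (X (Sum.inl 3) - F4 n k) * W m η -
            C ((m : ℕ) : ℤ) * F1 n k * (X (Sum.inl 1) + F3 n k) =
            (X (Sum.inl 2) - F4 n k) * W m η -
            (X (Sum.inl 2) - X (Sum.inl 3)) * W m η -
            (C ((m : ℕ) : ℤ) * (X (Sum.inl 1) + F3 n k)) * F1 n k := by ring
        rw [heq]
        exact sub_mem (sub_mem (hzwJ m η) (hzzwJ m η)) (Ideal.mul_mem_left _ _ hF1J)
      · exact sub_mem (hwwJ m s η α hne) (hsq _)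
      · exact sub_mem (hwtJ m t η hle') (hsq _)
    · rw [Ideal.span_le, Set.singleton_subset_iff]
      exact hF1J

/-- (Corollary 3.11.) The ring homomorphism `ℤ[X'] → ℤ[X]/(I₀ + (f₁))` determined by
`x ↦ x̄`, `y ↦ ȳ`, `z ↦ z̄₊`, `z' ↦ z̄₋` and `w_{m,η} ↦ w̄_{m,η}` induces a ring
isomorphism `ℤ[X']/J ≅ ℤ[X]/(I₀ + (f₁))`: there is a ring isomorphism sending the class
of each variable of `ℤ[X']` to the class in `ℤ[X]/(I₀ + (f₁))` of the corresponding
variable of `ℤ[X]`. -/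
theorem stable_green_ring_iso (n : ℕ) (hn : 2 < n) (k : Type*) [Field k] [IsAlgClosed k]
    (q : k) (hq : orderOf q = n) :
    ∃ e : (MvPolynomial (BigVar k) ℤ ⧸ idealJ n k) ≃+*
        (MvPolynomial (BigVar k) ℤ ⧸ (idealI0 n k + Ideal.span {F1 n k})),
      ∀ v : BigVar k,
        e (Ideal.Quotient.mk (idealJ n k) (X v)) =
          Ideal.Quotient.mk (idealI0 n k + Ideal.span {F1 n k}) (X v) :=
  ⟨Ideal.quotEquivOfEq (idealJ_eq n k), fun v => Ideal.quotEquivOfEq_mk _ _⟩
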